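/- Let C be a bounded convex subset of a Banach space and U : C → C nonexpansive; set V = (1/2)I + (1/2)U. If (V^{k_α} x)_α is any subnet of the iterates at a point x ∈ C, then lim_α ‖U(V^{k_α} x) − V^{k_α} x‖ = 0; i.e., the iterates of V form an approximate fixed point net for U. -/

import Mathlib

open Filter Topology

/-- With `U : C → C` nonexpansive on a bounded convex set `C` and
`V = (1/2)I + (1/2)U`, any subnet of the iterates `(V^k x)` is an approximate
fixed point net for `U`: `‖U(V^{k_α} x) − V^{k_α} x‖ → 0`. -/
theorem stmt11 {X : Type*} [NormedAddCommGroup X] [NormedSpace ℝ X] [CompleteSpace X]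
    (C : Set X) (hbdd : Bornology.IsBounded C) (hconv : Convex ℝ C)
    (U : X → X) (hU : Set.MapsTo U C C)
    (hUne : ∀ y ∈ C, ∀ z ∈ C, ‖U y - U z‖ ≤ ‖y - z‖)
    (x : X) (hx : x ∈ C)
    {ι : Type*} (l : Filter ι) [l.NeBot] (k : ι → ℕ) (hk : Tendsto k l atTop) :
    Tendsto (fun α =>
        ‖U ((fun y => (1 / 2 : ℝ) • y + (1 / 2 : ℝ) • U y)^[k α] x) -
         (fun y => (1 / 2 : ℝ) • y + (1 / 2 : ℝ) • U y)^[k α] x‖) l (𝓝 0) := by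
  set V : X → X := fun y => (1 / 2 : ℝ) • y + (1 / 2 : ℝ) • U y with hV
  set xs : ℕ → X := fun n => V^[n] x with hxs
  set d : ℕ → ℝ := fun n => ‖U (xs n) - xs n‖ with hd
  have hVmem : ∀ y ∈ C, V y ∈ C := by
    intro y hy
    have := hconv hy (hU hy) (by norm_num : (0:ℝ) ≤ 1/2) (by norm_num : (0:ℝ) ≤ 1/2)
      (by norm_num : (1/2 : ℝ) + 1/2 = 1)
    simpa [hV] using this
  have hmem : ∀ n, xs n ∈ C := by
    intro n
    induction n with
    | zero => simpa [hxs] using hx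
    | succ n ih =>
        have h : xs (n+1) = V (xs n) := by
          simp only [hxs, Function.iterate_succ_apply']
        rw [h]; exact hVmem _ ih
  have hsucc : ∀ n, xs (n+1) = V (xs n) := by
    intro n; simp only [hxs, Function.iterate_succ_apply']
  have hstep : ∀ n, xs (n+1) - xs n = (1/2 : ℝ) • (U (xs n) - xs n) := by
    intro n; rw [hsucc n]; show ((1/2:ℝ) • xs n + (1/2:ℝ) • U (xs n)) - xs n = _; module
  have hstep2 : ∀ n, U (xs n) - xs (n+1) = (1/2 : ℝ) • (U (xs n) - xs n) := by
    intro n; rw [hsucc n]; show U (xs n) - ((1/2:ℝ) • xs n + (1/2:ℝ) • U (xs n)) = _; module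
  have h2 : ∀ n, (2:ℝ) • xs (n+1) = xs n + U (xs n) := by
    intro n; rw [hsucc n]; show (2:ℝ) • ((1/2:ℝ) • xs n + (1/2:ℝ) • U (xs n)) = _; module
  have hstepn : ∀ n, ‖xs (n+1) - xs n‖ = (1/2) * d n := by
    intro n
    rw [hstep n, norm_smul, Real.norm_eq_abs, abs_of_pos (by norm_num : (0:ℝ) < 1/2)]
  have hstep2n : ∀ n, ‖U (xs n) - xs (n+1)‖ = (1/2) * d n := by
    intro n
    rw [hstep2 n, norm_smul, Real.norm_eq_abs, abs_of_pos (by norm_num : (0:ℝ) < 1/2)]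
  have hdsucc : ∀ n, d (n+1) ≤ d n := by
    intro n
    have h1 : d (n+1) ≤ ‖U (xs (n+1)) - U (xs n)‖ + ‖U (xs n) - xs (n+1)‖ := by
      simpa [hd] using norm_sub_le_norm_sub_add_norm_sub (U (xs (n+1))) (U (xs n)) (xs (n+1))
    have h2' : ‖U (xs (n+1)) - U (xs n)‖ ≤ ‖xs (n+1) - xs n‖ :=
      hUne _ (hmem _) _ (hmem _)
    rw [hstep2n n] at h1
    rw [hstepn n] at h2'
    linarith
  have hant : Antitone d := antitone_nat_of_succ_le hdsucc
  have hd0 : ∀ n, 0 ≤ d n := fun n => norm_nonneg _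
  have hdist : ∀ n i, ‖xs (i+n) - xs i‖ ≤ ((n:ℝ)/2) * d i := by
    intro n
    induction n with
    | zero => intro i; simp
    | succ n ih =>
        intro i
        have t1 : ‖xs (i+(n+1)) - xs i‖ ≤ ‖xs (i+n+1) - xs (i+n)‖ + ‖xs (i+n) - xs i‖ := by
          have := norm_sub_le_norm_sub_add_norm_sub (xs (i+(n+1))) (xs (i+n)) (xs i)
          simpa [show i+(n+1) = i+n+1 by omega] using this
        have t2 := hstepn (i+n)
        have t3 : d (i+n) ≤ d i := hant (Nat.le_add_right i n)
        have t4 := ih i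
        rw [t2] at t1
        push_cast
        linarith
  -- Goebel–Kirk inequality
  have hGK : ∀ (n i : ℕ), (1 + (n:ℝ)/2) * d i ≤ ‖U (xs (i+n)) - xs i‖ + 2^n * (d i - d (i+n)) := by
    intro n
    induction n with
    | zero => intro i; simp [hd]
    | succ n ih =>
        intro i
        have key : U (xs (i+(n+1))) - xs i
            = (2:ℝ) • (U (xs (i+(n+1))) - xs (i+1)) - (U (xs (i+(n+1))) - U (xs i)) := by
          linear_combination (norm := module) h2 i
        have lb : 2 * ‖U (xs (i+(n+1))) - xs (i+1)‖ - ‖U (xs (i+(n+1))) - U (xs i)‖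
            ≤ ‖U (xs (i+(n+1))) - xs i‖ := by
          rw [key]
          have t := norm_sub_norm_le ((2:ℝ) • (U (xs (i+(n+1))) - xs (i+1)))
            (U (xs (i+(n+1))) - U (xs i))
          have h2n : ‖(2:ℝ) • (U (xs (i+(n+1))) - xs (i+1))‖
              = 2 * ‖U (xs (i+(n+1))) - xs (i+1)‖ := by
            rw [norm_smul, Real.norm_eq_abs, abs_of_pos (by norm_num : (0:ℝ) < 2)]
          linarith
        have hne : ‖U (xs (i+(n+1))) - U (xs i)‖ ≤ ‖xs (i+(n+1)) - xs i‖ :=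
          hUne _ (hmem _) _ (hmem _)
        have hdb := hdist (n+1) i
        have ihh := ih (i+1)
        rw [show i+1+n = i+(n+1) by omega] at ihh
        have hpow : (n:ℝ) + 2 ≤ 2 * 2^n := by
          have h : n + 1 ≤ 2^n := Nat.lt_two_pow_self (n := n)
          have h' : (n:ℝ) + 1 ≤ 2^n := by exact_mod_cast h
          have h1 : (1:ℝ) ≤ 2^n := one_le_pow₀ (by norm_num)
          linarith
        have hd1 : d (i+1) ≤ d i := hdsucc i
        have hprod : 0 ≤ (2 * 2^n - ((n:ℝ) + 2)) * (d i - d (i+1)) :=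
          mul_nonneg (by linarith) (by linarith)
        push_cast at hdb ⊢
        rw [show (2:ℝ)^(n+1) = 2 * 2^n by ring]
        nlinarith [lb, hne, hdb, ihh, hprod]
  -- limit of d
  have hbddbelow : BddBelow (Set.range d) := ⟨0, by rintro _ ⟨n, rfl⟩; exact hd0 n⟩
  set r : ℝ := ⨅ n, d n with hr
  have hlim : Tendsto d atTop (𝓝 r) := tendsto_atTop_ciInf hant hbddbelow
  have hrle : ∀ n, r ≤ d n := fun n => ciInf_le hbddbelow n
  have hr0 : 0 ≤ r := le_ciInf hd0
  obtain ⟨D, hD⟩ := Metric.isBounded_iff.mp hbdd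
  have hDnn : 0 ≤ D := le_trans (by simp) (hD hx hx)
  have hDle : ∀ n i, ‖U (xs (i+n)) - xs i‖ ≤ D := by
    intro n i
    have := hD (hU (hmem (i+n))) (hmem i)
    rwa [dist_eq_norm] at this
  have hkey : ∀ n : ℕ, (1 + (n:ℝ)/2) * r ≤ D := by
    intro n
    refine le_of_forall_pos_le_add ?_
    intro ε hε
    have hgap : Tendsto (fun i => d i - d (i+n)) atTop (𝓝 0) := by
      have h1 : Tendsto (fun i => d (i+n)) atTop (𝓝 r) :=
        hlim.comp (tendsto_add_atTop_nat n)
      simpa using hlim.sub h1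
    have hev : ∀ᶠ i in atTop, d i - d (i+n) < ε / 2^n :=
      hgap.eventually_lt_const (by positivity)
    obtain ⟨i, hi⟩ := hev.exists
    have hGKi := hGK n i
    have hDi := hDle n i
    have hri := hrle i
    have hc : (0:ℝ) ≤ 1 + (n:ℝ)/2 := by positivity
    have h2p : (0:ℝ) < 2^n := by positivity
    have hlt : 2^n * (d i - d (i+n)) < ε := by
      rw [mul_comm]; exact (lt_div_iff₀ h2p).mp hi
    have hmul := mul_le_mul_of_nonneg_left hri hc
    linarith
  have hrzero : r = 0 := by
    by_contra hne
    have hrpos : 0 < r := lt_of_le_of_ne hr0 (Ne.symm hne)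
    obtain ⟨n, hn⟩ := exists_nat_ge (2*D/r)
    rw [div_le_iff₀ hrpos] at hn
    have := hkey n
    nlinarith
  rw [hrzero] at hlim
  exact hlim.comp hk
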